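/- Let r, u, v, w, z^+, z^−, z be real numbers such that z r^k ≠ z^+ and z r^k ≠ z^− for every integer k ≥ 0. For x ∈ {z, r z} define g(x) := ∑_{n=0}^∞ (−u)^n (w − v r^n x) / ∏_{k=0}^n ((x r^k − z^+)(x r^k − z^−)), and assume both series (for x = z and x = r z) converge absolutely. Then u · g(r z) = −(z − z^+)(z − z^−) · g(z) − v z + w. -/

import Mathlib

/-- The explicit series
`g(x) = ∑ₙ (−u)ⁿ (w − v rⁿ x) / ∏_{k=0}^{n} (x rᵏ − z⁺)(x rᵏ − z⁻)`
solves the functional equation `u g(rz) = −(z − z⁺)(z − z⁻) g(z) − vz + w`. -/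
theorem series_solves_functional_equation
    (r u v w zp zm z : ℝ)
    (hne : ∀ k : ℕ, z * r ^ k ≠ zp ∧ z * r ^ k ≠ zm)
    (f : ℝ → ℕ → ℝ)
    (hf : ∀ x n, f x n = (-u) ^ n * (w - v * r ^ n * x)
      / ∏ k ∈ Finset.range (n + 1), ((x * r ^ k - zp) * (x * r ^ k - zm)))
    (h1 : Summable fun n => |f z n|)
    (h2 : Summable fun n => |f (r * z) n|) :
    u * (∑' n, f (r * z) n)
      = -((z - zp) * (z - zm)) * (∑' n, f z n) - v * z + w := by
  have hs1 : Summable (f z) := h1.of_abs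
  have hzne : ∀ k : ℕ, z * r ^ k - zp ≠ 0 ∧ z * r ^ k - zm ≠ 0 := fun k =>
    ⟨sub_ne_zero.mpr (hne k).1, sub_ne_zero.mpr (hne k).2⟩
  have hzz : (z - zp) * (z - zm) ≠ 0 := by
    have h := hzne 0
    simp only [pow_zero, mul_one] at h
    exact mul_ne_zero h.1 h.2
  have key : ∀ n, u * f (r * z) n = -((z - zp) * (z - zm)) * f z (n + 1) := by
    intro n
    rw [hf, hf]
    have hP : ∏ k ∈ Finset.range (n + 1 + 1), ((z * r ^ k - zp) * (z * r ^ k - zm))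
        = (∏ k ∈ Finset.range (n + 1), ((r * z * r ^ k - zp) * (r * z * r ^ k - zm)))
          * ((z - zp) * (z - zm)) := by
      rw [Finset.prod_range_succ']
      simp only [pow_zero, mul_one]
      congr 1
      refine Finset.prod_congr rfl fun k _ => ?_
      rw [pow_succ]; ring_nf
    rw [hP]
    have hPne : (∏ k ∈ Finset.range (n + 1),
        ((r * z * r ^ k - zp) * (r * z * r ^ k - zm))) ≠ 0 := by
      apply Finset.prod_ne_zero_iff.mpr
      intro k _
      have h := hne (k + 1)
      rw [pow_succ] at h
      refine mul_ne_zero (sub_ne_zero.mpr ?_) (sub_ne_zero.mpr ?_)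
      · intro hh; exact h.1 (by rw [← hh]; ring)
      · intro hh; exact h.2 (by rw [← hh]; ring)
    rw [pow_succ]
    have hz1 : z - zp ≠ 0 := by simpa using (hzne 0).1
    have hz2 : z - zm ≠ 0 := by simpa using (hzne 0).2
    field_simp
    ring
  calc u * (∑' n, f (r * z) n)
      = ∑' n, u * f (r * z) n := by rw [tsum_mul_left]
    _ = ∑' n, -((z - zp) * (z - zm)) * f z (n + 1) := by simp_rw [key]
    _ = -((z - zp) * (z - zm)) * ∑' n, f z (n + 1) := by rw [tsum_mul_left]
    _ = -((z - zp) * (z - zm)) * ((∑' n, f z n) - f z 0) := by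
        rw [Summable.tsum_eq_zero_add hs1]; ring
    _ = -((z - zp) * (z - zm)) * (∑' n, f z n) - v * z + w := by
        rw [hf]
        simp only [pow_zero, one_mul, mul_one, zero_add, Finset.prod_range_one]
        have hz1 : z - zp ≠ 0 := by simpa using (hzne 0).1
        have hz2 : z - zm ≠ 0 := by simpa using (hzne 0).2
        field_simp
        ring
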